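/- Any Minkowski-additive translation-invariant real-valued map m on nonempty convex polytopes in ℝ² is a valuation: if P, Q, and P ∪ Q are all convex polytopes, then m(P) + m(Q) = m(P ∪ Q) + m(P ∩ Q). -/

import Mathlib

open Pointwise

/-- A (nonempty) convex polytope in the plane: the convex hull of a nonempty finite set. -/
def IsPolytope (P : Set (ℝ × ℝ)) : Prop :=
  ∃ S : Finset (ℝ × ℝ), S.Nonempty ∧ P = convexHull ℝ (S : Set (ℝ × ℝ))

section Aux

variable {E : Type*} [AddCommGroup E] [Module ℝ E]

/-- If `x` is a non-extreme point of a convex set `P`, there is a nonzero direction `u`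
such that a small symmetric segment around `x` in direction `u` lies in `P`. -/
lemma exists_symm_dir [NoZeroSMulDivisors ℝ E] {P : Set E} (hP : Convex ℝ P)
    {x : E} (hx : x ∈ P) (hnx : x ∉ P.extremePoints ℝ) :
    ∃ u : E, u ≠ 0 ∧ ∀ s : ℝ, |s| ≤ 1 → x + s • u ∈ P := by
  rw [mem_extremePoints] at hnx
  push_neg at hnx
  obtain ⟨a, ha, b, hb, hseg, hne⟩ := hnx hx
  obtain ⟨p, q, hp, hq, hpq, hcomb⟩ := hseg
  obtain rfl : q = 1 - p := by linarith
  have hax : a ≠ x := by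
    intro h
    apply hne h
    apply smul_right_injective E (ne_of_gt hq)
    have h1 : (1 - p) • b = x - p • a := by rw [← hcomb]; module
    show (1 - p) • b = (1 - p) • x
    rw [h1, h]; module
  set u : E := a - x with hu_def
  have hu : u ≠ 0 := sub_ne_zero.mpr hax
  set β : ℝ := p / (1 - p) with hβ_def
  have hβ : 0 < β := div_pos hp hq
  have hb_eq : b = x - β • u := by
    apply smul_right_injective E (ne_of_gt hq)
    have h1 : (1 - p) • b = x - p • a := by rw [← hcomb]; module
    have h2 : (1 - p) * β = p := by
      rw [hβ_def]; field_simp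
    show (1 - p) • b = (1 - p) • (x - β • u)
    rw [h1, smul_sub, smul_smul, h2, hu_def]; module
  set ε : ℝ := min 1 β with hε_def
  have hε : 0 < ε := lt_min one_pos hβ
  refine ⟨ε • u, smul_ne_zero (ne_of_gt hε) hu, ?_⟩
  intro s hs
  have key : ∀ c : ℝ, |c| ≤ ε → x + c • u ∈ P := by
    intro c hc
    rcases le_or_gt 0 c with h0 | h0
    · have hc1 : c ≤ 1 := le_trans (le_trans (le_abs_self c) hc) (min_le_left _ _)
      have := hP hx ha (by linarith : (0:ℝ) ≤ 1 - c) h0 (by ring)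
      have heq : (1 - c) • x + c • a = x + c • u := by rw [hu_def]; module
      rwa [heq] at this
    · have hcβ : -c ≤ β := by
        have : |c| ≤ β := le_trans hc (min_le_right _ _)
        rw [abs_of_neg h0] at this; exact this
      set r : ℝ := (-c) / β with hr_def
      have hr0 : 0 ≤ r := div_nonneg (by linarith) hβ.le
      have hr1 : r ≤ 1 := (div_le_one hβ).mpr hcβ
      have hbP : x - β • u ∈ P := hb_eq ▸ hb
      have := hP hx hbP (by linarith : (0:ℝ) ≤ 1 - r) hr0 (by ring)
      have heq : (1 - r) • x + r • (x - β • u) = x + c • u := by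
        have hrβ : r * β = -c := div_mul_cancel₀ (-c) (ne_of_gt hβ)
        have : (1 - r) • x + r • (x - β • u) = x - (r * β) • u := by module
        rw [this, hrβ]; module
      rwa [heq] at this
  have : x + s • (ε • u) = x + (s * ε) • u := by rw [smul_smul]
  rw [this]
  apply key
  rw [abs_mul, abs_of_pos hε]
  calc |s| * ε ≤ 1 * ε := by nlinarith [abs_nonneg s]
    _ = ε := one_mul ε

/-- Key lemma: if `P`, `Q` and `P ∪ Q` are convex, then extreme points of `P ∩ Q` are
extreme points of `P` or of `Q`. -/
lemma extremePoints_inter_subset [NoZeroSMulDivisors ℝ E] {P Q : Set E}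
    (hPconv : Convex ℝ P) (hQconv : Convex ℝ Q) (hU : Convex ℝ (P ∪ Q)) :
    (P ∩ Q).extremePoints ℝ ⊆ P.extremePoints ℝ ∪ Q.extremePoints ℝ := by
  intro x hx
  by_contra hcon
  rw [Set.mem_union, not_or] at hcon
  obtain ⟨u, hu, hPu⟩ := exists_symm_dir hPconv hx.1.1 hcon.1
  obtain ⟨v, hv, hQv⟩ := exists_symm_dir hQconv hx.1.2 hcon.2
  -- basic memberships
  have hPup : x + (1:ℝ) • u ∈ P := hPu 1 (by norm_num [abs_le])
  have hPum : x + (-1:ℝ) • u ∈ P := hPu (-1) (by norm_num [abs_le])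
  have hQvp : x + (1:ℝ) • v ∈ Q := hQv 1 (by norm_num [abs_le])
  have hQvm : x + (-1:ℝ) • v ∈ Q := hQv (-1) (by norm_num [abs_le])
  have hPu13 : x + (1/3:ℝ) • u ∈ P := hPu (1/3) (by norm_num [abs_le])
  have hPu13' : x + (-(1/3):ℝ) • u ∈ P := hPu (-(1/3)) (by norm_num [abs_le])
  have hQv13 : x + (1/3:ℝ) • v ∈ Q := hQv (1/3) (by norm_num [abs_le])
  have hQv13' : x + (-(1/3):ℝ) • v ∈ Q := hQv (-(1/3)) (by norm_num [abs_le])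
  -- convex combination step
  have step : ∀ {A : Set E}, Convex ℝ A → ∀ {a b w : E}, a ∈ A → b ∈ A →
      (2/3:ℝ) • a + (1/3:ℝ) • b = w → w ∈ A := by
    intro A hA a b w ha hb he
    exact he ▸ hA ha hb (by norm_num [abs_le]) (by norm_num [abs_le]) (by norm_num [abs_le])
  -- the four corner points lie in P ∪ Q
  have corner : ∀ s t : ℝ, |s| ≤ 1 → |t| ≤ 1 →
      (1/2:ℝ) • (x + s • u) + (1/2:ℝ) • (x + t • v) ∈ P ∪ Q := by
    intro s t hs ht
    exact hU (Set.mem_union_left _ (hPu s hs)) (Set.mem_union_right _ (hQv t ht))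
      (by norm_num [abs_le]) (by norm_num [abs_le]) (by norm_num [abs_le])
  have hy := corner 1 1 (by norm_num [abs_le]) (by norm_num [abs_le])
  have hy' := corner (-1) (-1) (by norm_num [abs_le]) (by norm_num [abs_le])
  have hz := corner 1 (-1) (by norm_num [abs_le]) (by norm_num [abs_le])
  have hz' := corner (-1) 1 (by norm_num [abs_le]) (by norm_num [abs_le])
  -- deductions
  have dyP : (1/2:ℝ) • (x + (1:ℝ) • u) + (1/2:ℝ) • (x + (1:ℝ) • v) ∈ P →
      x + (1/3:ℝ) • v ∈ P ∩ Q := fun h =>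
    ⟨step hPconv h hPum (by module), hQv13⟩
  have dyQ : (1/2:ℝ) • (x + (1:ℝ) • u) + (1/2:ℝ) • (x + (1:ℝ) • v) ∈ Q →
      x + (1/3:ℝ) • u ∈ P ∩ Q := fun h =>
    ⟨hPu13, step hQconv h hQvm (by module)⟩
  have dy'P : (1/2:ℝ) • (x + (-1:ℝ) • u) + (1/2:ℝ) • (x + (-1:ℝ) • v) ∈ P →
      x + (-(1/3):ℝ) • v ∈ P ∩ Q := fun h =>
    ⟨step hPconv h hPup (by module), hQv13'⟩
  have dy'Q : (1/2:ℝ) • (x + (-1:ℝ) • u) + (1/2:ℝ) • (x + (-1:ℝ) • v) ∈ Q →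
      x + (-(1/3):ℝ) • u ∈ P ∩ Q := fun h =>
    ⟨hPu13', step hQconv h hQvp (by module)⟩
  have dzP : (1/2:ℝ) • (x + (1:ℝ) • u) + (1/2:ℝ) • (x + (-1:ℝ) • v) ∈ P →
      x + (-(1/3):ℝ) • v ∈ P ∩ Q := fun h =>
    ⟨step hPconv h hPum (by module), hQv13'⟩
  have dzQ : (1/2:ℝ) • (x + (1:ℝ) • u) + (1/2:ℝ) • (x + (-1:ℝ) • v) ∈ Q →
      x + (1/3:ℝ) • u ∈ P ∩ Q := fun h =>
    ⟨hPu13, step hQconv h hQvp (by module)⟩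
  have dz'P : (1/2:ℝ) • (x + (-1:ℝ) • u) + (1/2:ℝ) • (x + (1:ℝ) • v) ∈ P →
      x + (1/3:ℝ) • v ∈ P ∩ Q := fun h =>
    ⟨step hPconv h hPup (by module), hQv13⟩
  have dz'Q : (1/2:ℝ) • (x + (-1:ℝ) • u) + (1/2:ℝ) • (x + (1:ℝ) • v) ∈ Q →
      x + (-(1/3):ℝ) • u ∈ P ∩ Q := fun h =>
    ⟨hPu13', step hQconv h hQvm (by module)⟩
  -- final contradiction: a symmetric pair in P ∩ Q around x
  have final : ∀ w : E, w ≠ 0 → x + (1/3:ℝ) • w ∈ P ∩ Q → x + (-(1/3):ℝ) • w ∈ P ∩ Q →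
      False := by
    intro w hw hp hm
    have hseg : x ∈ openSegment ℝ (x + (1/3:ℝ) • w) (x + (-(1/3):ℝ) • w) :=
      ⟨1/2, 1/2, by norm_num, by norm_num, by norm_num, by module⟩
    have := hx.2 hp hm hseg
    have hzero : (1/3:ℝ) • w = 0 := by
      have := congrArg (fun y => y - x) this
      simpa using this
    exact hw (by simpa using (smul_eq_zero.1 hzero).resolve_left (by norm_num [abs_le]))
  rcases hy with hyP | hyQ
  · have hvp := dyP hyP
    rcases hy' with hy'P | hy'Q
    · exact final v hv hvp (dy'P hy'P)
    · have hum := dy'Q hy'Q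
      rcases hz with hzP | hzQ
      · exact final v hv hvp (dzP hzP)
      · exact final u hu (dzQ hzQ) hum
  · have hup := dyQ hyQ
    rcases hy' with hy'P | hy'Q
    · have hvm := dy'P hy'P
      rcases hz' with hz'P | hz'Q
      · exact final v hv (dz'P hz'P) hvm
      · exact final u hu hup (dz'Q hz'Q)
    · exact final u hu hup (dy'Q hy'Q)

end Aux

section Aux2

variable {E : Type*} [NormedAddCommGroup E] [NormedSpace ℝ E]

/-- If `P ∪ Q` is convex and `P`, `Q` are closed, any segment from `P` to `Q` meets `P ∩ Q`. -/
lemma exists_inter_point {P Q : Set E} (hPc : IsClosed P) (hQc : IsClosed Q)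
    (hU : Convex ℝ (P ∪ Q)) {x y : E} (hx : x ∈ P) (hy : y ∈ Q) :
    ∃ z ∈ P ∩ Q, z ∈ segment ℝ x y := by
  have hseg : segment ℝ x y ⊆ P ∪ Q :=
    hU.segment_subset (Set.mem_union_left _ hx) (Set.mem_union_right _ hy)
  have hconn : IsPreconnected (segment ℝ x y) := (convex_segment x y).isPreconnected
  have h := isPreconnected_closed_iff.1 hconn P Q hPc hQc hseg
    ⟨x, left_mem_segment ℝ x y, hx⟩ ⟨y, right_mem_segment ℝ x y, hy⟩
  obtain ⟨z, hz, hzP, hzQ⟩ := h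
  exact ⟨z, ⟨hzP, hzQ⟩, hz⟩

/-- Sallee's identity: if `P ∪ Q` is convex then `P + Q = (P ∪ Q) + (P ∩ Q)`. -/
lemma sallee {P Q : Set E} (hPc : IsClosed P) (hQc : IsClosed Q)
    (hU : Convex ℝ (P ∪ Q)) : P + Q = (P ∪ Q) + (P ∩ Q) := by
  ext w
  constructor
  · rintro ⟨a, ha, b, hb, rfl⟩
    obtain ⟨z, hzPQ, p, q, hp, hq, hpq, hz⟩ := exists_inter_point hPc hQc hU ha hb
    refine ⟨q • a + p • b, ?_, z, hzPQ, ?_⟩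
    · exact hU (Set.mem_union_left _ ha) (Set.mem_union_right _ hb) hq hp (by linarith)
    · rw [← hz]
      have : q = 1 - p := by linarith
      rw [this]; module
  · rintro ⟨a, ha, b, hb, rfl⟩
    rcases ha with haP | haQ
    · exact ⟨a, haP, b, hb.2, rfl⟩
    · exact ⟨b, hb.1, a, haQ, add_comm b a⟩

end Aux2

/-- The intersection of two polytopes whose union is convex is a polytope. -/
lemma isPolytope_inter {P Q : Set (ℝ × ℝ)} (hP : IsPolytope P) (hQ : IsPolytope Q)
    (hU : Convex ℝ (P ∪ Q)) : IsPolytope (P ∩ Q) := by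
  obtain ⟨S, hSne, rfl⟩ := hP
  obtain ⟨T, hTne, rfl⟩ := hQ
  set P := convexHull ℝ (S : Set (ℝ × ℝ))
  set Q := convexHull ℝ (T : Set (ℝ × ℝ))
  have hPcomp : IsCompact P := S.finite_toSet.isCompact_convexHull (𝕜 := ℝ)
  have hQcomp : IsCompact Q := T.finite_toSet.isCompact_convexHull (𝕜 := ℝ)
  have hPconv : Convex ℝ P := convex_convexHull ℝ _
  have hQconv : Convex ℝ Q := convex_convexHull ℝ _
  have hIcomp : IsCompact (P ∩ Q) := hPcomp.inter_right hQcomp.isClosed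
  have hIconv : Convex ℝ (P ∩ Q) := hPconv.inter hQconv
  have hIne : (P ∩ Q).Nonempty := by
    obtain ⟨s, hs⟩ := hSne
    obtain ⟨t, ht⟩ := hTne
    obtain ⟨z, hz, _⟩ := exists_inter_point hPcomp.isClosed hQcomp.isClosed hU
      (subset_convexHull ℝ _ hs) (subset_convexHull ℝ _ ht)
    exact ⟨z, hz⟩
  have hEfin : ((P ∩ Q).extremePoints ℝ).Finite := by
    apply Set.Finite.subset (S.finite_toSet.union T.finite_toSet)
    intro x hx
    rcases extremePoints_inter_subset hPconv hQconv hU hx with h | h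
    · exact Set.mem_union_left _ (extremePoints_convexHull_subset h)
    · exact Set.mem_union_right _ (extremePoints_convexHull_subset h)
  have hKM : closure (convexHull ℝ ((P ∩ Q).extremePoints ℝ)) = P ∩ Q :=
    closure_convexHull_extremePoints hIcomp hIconv
  have hclosed : IsClosed (convexHull ℝ ((P ∩ Q).extremePoints ℝ)) :=
    hEfin.isCompact_convexHull (𝕜 := ℝ).isClosed
  have hEq : P ∩ Q = convexHull ℝ ((P ∩ Q).extremePoints ℝ) := by
    have h := hclosed.closure_eq
    rw [hKM] at h
    exact h
  refine ⟨hEfin.toFinset, ?_, ?_⟩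
  · rw [Set.Finite.toFinset_nonempty]
    exact hIcomp.extremePoints_nonempty hIne
  · rw [hEfin.coe_toFinset]
    exact hEq

theorem stmt4 (m : Set (ℝ × ℝ) → ℝ)
    (hadd : ∀ P Q : Set (ℝ × ℝ), IsPolytope P → IsPolytope Q → m (P + Q) = m P + m Q)
    (htrans : ∀ (P : Set (ℝ × ℝ)) (t : ℝ × ℝ), IsPolytope P → m (P + {t}) = m P)
    (P Q : Set (ℝ × ℝ)) (hP : IsPolytope P) (hQ : IsPolytope Q) (hPQ : IsPolytope (P ∪ Q)) :
    m P + m Q = m (P ∪ Q) + m (P ∩ Q) := by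
  have hUconv : Convex ℝ (P ∪ Q) := by
    obtain ⟨U, _, hUeq⟩ := hPQ
    rw [hUeq]; exact convex_convexHull ℝ _
  have hPclosed : IsClosed P := by
    obtain ⟨S, _, rfl⟩ := hP
    exact S.finite_toSet.isCompact_convexHull (𝕜 := ℝ).isClosed
  have hQclosed : IsClosed Q := by
    obtain ⟨T, _, rfl⟩ := hQ
    exact T.finite_toSet.isCompact_convexHull (𝕜 := ℝ).isClosed
  have hIP : IsPolytope (P ∩ Q) := isPolytope_inter hP hQ hUconv
  have e1 := hadd P Q hP hQ
  have e2 := hadd (P ∪ Q) (P ∩ Q) hPQ hIP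
  rw [sallee hPclosed hQclosed hUconv] at e1
  rw [e2] at e1
  linarith
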